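/- For a measurable Banach bundle T over X, the dual module Γ(T)* of L^0(m)-linear continuous maps Γ(T) → L^0(m), with pointwise dual norm, is isometrically isomorphic as an L^0(m)-normed L^0(m)-module to Γ(T*), the section module of the dual bundle whose fiber norm at x is the dual norm of n(x,·). -/

import Mathlib

open MeasureTheory Filter

namespace L0SerreSwan

/-- A measurable Banach bundle over `(X,d,m)`: a Borel partition `(E_n)_{n∈ℕ}` of `X`,
with total space `⊔ₙ Eₙ × ℝⁿ`, together with a measurable function `nrm` assigning to
`m`-a.e. point `x ∈ E_n` a norm `nrm n x ·` on the fiber `ℝⁿ`. -/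
structure MBB (X : Type*) [MeasurableSpace X] (μ : MeasureTheory.Measure X) where
  E : ℕ → Set X
  measE : ∀ n, MeasurableSet (E n)
  disjE : ∀ n m, n ≠ m → Disjoint (E n) (E m)
  unionE : (⋃ n, E n) = Set.univ
  nrm : (n : ℕ) → X → (Fin n → ℝ) → ℝ
  meas_nrm : ∀ n, Measurable (fun p : X × (Fin n → ℝ) => nrm n p.1 p.2)
  nrm_nonneg : ∀ n, ∀ᵐ x ∂μ, x ∈ E n → ∀ v, 0 ≤ nrm n x v
  nrm_definite : ∀ n, ∀ᵐ x ∂μ, x ∈ E n → ∀ v, nrm n x v = 0 → v = 0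
  nrm_smul : ∀ n, ∀ᵐ x ∂μ, x ∈ E n → ∀ (c : ℝ) (v), nrm n x (c • v) = |c| * nrm n x v
  nrm_triangle : ∀ n, ∀ᵐ x ∂μ, x ∈ E n → ∀ v w, nrm n x (v + w) ≤ nrm n x v + nrm n x w

variable {X : Type*} [MeasurableSpace X] {μ : MeasureTheory.Measure X}

/-- A measurable section of a measurable Banach bundle, recorded by its values
`val n x ∈ ℝⁿ` (only the values for `x ∈ E_n` are relevant). -/
structure Sec (B : MBB X μ) where
  val : (n : ℕ) → X → Fin n → ℝ
  meas : ∀ n, Measurable (val n)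

/-- Two sections agree `m`-a.e. (fiberwise, on each piece of the partition). -/
def Sec.aeeq (B : MBB X μ) (s t : Sec B) : Prop :=
  ∀ n, ∀ᵐ x ∂μ, x ∈ B.E n → s.val n x = t.val n x

/-- Pointwise sum of sections. -/
def Sec.add {B : MBB X μ} (s t : Sec B) : Sec B :=
  ⟨fun n x i => s.val n x i + t.val n x i, fun n =>
    measurable_pi_lambda _ fun i =>
      ((measurable_pi_apply i).comp (s.meas n)).add
        ((measurable_pi_apply i).comp (t.meas n))⟩

/-- Pointwise difference of sections. -/
def Sec.sub {B : MBB X μ} (s t : Sec B) : Sec B :=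
  ⟨fun n x i => s.val n x i - t.val n x i, fun n =>
    measurable_pi_lambda _ fun i =>
      ((measurable_pi_apply i).comp (s.meas n)).sub
        ((measurable_pi_apply i).comp (t.meas n))⟩

/-- Multiplication of a section by a (Borel representative of an) `L⁰` function. -/
def Sec.smul {B : MBB X μ} (g : X → ℝ) (hg : Measurable g) (s : Sec B) : Sec B :=
  ⟨fun n x i => g x * s.val n x i, fun n =>
    measurable_pi_lambda _ fun i =>
      hg.mul ((measurable_pi_apply i).comp (s.meas n))⟩

/-- The pointwise norm `|s|(x) = nrm(s(x))` of a section. -/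
noncomputable def ptNorm (B : MBB X μ) (s : Sec B) : X → ℝ :=
  fun x => ∑' n, (B.E n).indicator (fun y => B.nrm n y (s.val n y)) x

/-- The distance `d(s,t) = ∫ |s-t| ∧ 1 dm'` on sections. -/
noncomputable def secDist (B : MBB X μ) (m' : MeasureTheory.Measure X) (s t : Sec B) : ℝ :=
  ∫ x, min (ptNorm B (s.sub t) x) 1 ∂m'

/-- The constant section associated to a vector `q ∈ ℝⁿ`: it equals `q` on `E_n` and
vanishes on the other pieces of the partition. -/
def constSec (B : MBB X μ) (n : ℕ) (q : Fin n → ℝ) : Sec B :=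
  ⟨fun k _x i => if h : k = n then q (Fin.cast h i) else 0,
   fun _k => measurable_const⟩

/-- A finite `L⁰`-linear combination `∑ᵢ gᵢ • uᵢ` of sections. -/
def lincomb {B : MBB X μ} {k : ℕ} (g : Fin k → X → ℝ) (hg : ∀ i, Measurable (g i))
    (u : Fin k → Sec B) : Sec B :=
  ⟨fun n x j => ∑ i, g i x * (u i).val n x j, fun n =>
    measurable_pi_lambda _ fun j =>
      Finset.measurable_sum _ fun i _ =>
        (hg i).mul ((measurable_pi_apply j).comp ((u i).meas n))⟩

/-- The dual norm of the fiber norm `nrm n x ·`: the supremum of `|v·w|` over the unit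
ball `{w : nrm n x w ≤ 1}`. -/
noncomputable def dualNrm (B : MBB X μ) (n : ℕ) (x : X) (v : Fin n → ℝ) : ℝ :=
  sSup {r : ℝ | ∃ w : Fin n → ℝ, B.nrm n x w ≤ 1 ∧ r = |∑ i, v i * w i|}

/-- The duality pairing `⟨s*, s⟩(x) = s*(x) · s(x)` between two sections. -/
noncomputable def pairing (B : MBB X μ) (sd s : Sec B) : X → ℝ :=
  fun x => ∑' n, (B.E n).indicator (fun y => ∑ i, sd.val n y i * s.val n y i) x

/-- The pointwise dual norm of a section, computed in the dual bundle `T*`. -/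
noncomputable def dualPtNorm (B : MBB X μ) (sd : Sec B) : X → ℝ :=
  fun x => ∑' n, (B.E n).indicator (fun y => dualNrm B n y (sd.val n y)) x

section Fiber


variable {n : ℕ} {N : (Fin n → ℝ) → ℝ}

lemma fiber_zero (hsmul : ∀ (c : ℝ) v, N (c • v) = |c| * N v) : N 0 = 0 := by
  have h := hsmul 0 0
  simpa using h

lemma fiber_repr (v : Fin n → ℝ) : v = ∑ i, v i • (Pi.single i (1:ℝ) : Fin n → ℝ) := by
  funext j
  simp [Finset.sum_apply, Pi.single_apply]

lemma fiber_sum_le (hsmul : ∀ (c : ℝ) v, N (c • v) = |c| * N v)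
    (htri : ∀ v w, N (v + w) ≤ N v + N w) {ι : Type*} (s : Finset ι) (f : ι → Fin n → ℝ) :
    N (∑ i ∈ s, f i) ≤ ∑ i ∈ s, N (f i) :=
  Finset.le_sum_of_subadditive N (fiber_zero hsmul).le htri s f

lemma fiber_le_sum (hsmul : ∀ (c : ℝ) v, N (c • v) = |c| * N v)
    (htri : ∀ v w, N (v + w) ≤ N v + N w) (v : Fin n → ℝ) :
    N v ≤ ∑ i, |v i| * N ((Pi.single i (1:ℝ) : Fin n → ℝ)) := by
  calc N v = N (∑ i, v i • (Pi.single i (1:ℝ) : Fin n → ℝ)) := by rw [← fiber_repr]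
    _ ≤ ∑ i, N (v i • (Pi.single i (1:ℝ) : Fin n → ℝ)) := fiber_sum_le hsmul htri _ _
    _ = ∑ i, |v i| * N ((Pi.single i (1:ℝ) : Fin n → ℝ)) := by simp [hsmul]

lemma fiber_cont (hnn : ∀ v, 0 ≤ N v) (hsmul : ∀ (c : ℝ) v, N (c • v) = |c| * N v)
    (htri : ∀ v w, N (v + w) ≤ N v + N w) : Continuous N := by
  set C : ℝ := ∑ i, N ((Pi.single i (1:ℝ) : Fin n → ℝ)) with hC
  have hC0 : 0 ≤ C := Finset.sum_nonneg fun i _ => hnn _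
  have h1 : ∀ a b : Fin n → ℝ, N a - N b ≤ C * dist a b := by
    intro a b
    have ht : N a ≤ N b + N (a - b) := by
      have := htri b (a - b); simpa using this
    have h2 : N (a - b) ≤ C * dist a b := by
      calc N (a - b) ≤ ∑ i, |(a - b) i| * N ((Pi.single i (1:ℝ) : Fin n → ℝ)) := fiber_le_sum hsmul htri _
        _ ≤ ∑ i, dist a b * N ((Pi.single i (1:ℝ) : Fin n → ℝ)) := by
            refine Finset.sum_le_sum fun i _ => mul_le_mul_of_nonneg_right ?_ (hnn _)
            have := dist_le_pi_dist a b i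
            simpa [Real.dist_eq] using this
        _ = C * dist a b := by rw [← Finset.mul_sum, mul_comm]
    linarith
  have key : ∀ v w, dist (N v) (N w) ≤ C * dist v w := by
    intro v w
    rw [Real.dist_eq]
    have h2 := h1 w v
    rw [dist_comm w v] at h2
    exact abs_sub_le_iff.mpr ⟨h1 v w, h2⟩
  exact (LipschitzWith.of_dist_le_mul (K := ⟨C, hC0⟩) key).continuous

lemma fiber_norm_lower (hnn : ∀ v, 0 ≤ N v) (hdef : ∀ v, N v = 0 → v = 0)
    (hsmul : ∀ (c : ℝ) v, N (c • v) = |c| * N v)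
    (htri : ∀ v w, N (v + w) ≤ N v + N w) :
    ∃ c : ℝ, 0 < c ∧ ∀ v, c * ‖v‖ ≤ N v := by
  rcases Nat.eq_zero_or_pos n with hn | hn
  · refine ⟨1, one_pos, fun v => ?_⟩
    subst hn
    have hv : v = 0 := Subsingleton.elim v 0
    rw [hv, fiber_zero hsmul, norm_zero, mul_zero]
  · haveI : Nontrivial (Fin n → ℝ) := by
      have hne : (Pi.single (⟨0, hn⟩ : Fin n) (1:ℝ) : Fin n → ℝ) ≠ 0 := by
        intro h
        have := congrFun h ⟨0, hn⟩
        simp [Pi.single_apply] at this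
      exact nontrivial_of_ne _ 0 hne
    have hcont := fiber_cont hnn hsmul htri
    obtain ⟨u, hu, humin⟩ := (isCompact_sphere (0 : Fin n → ℝ) 1).exists_isMinOn
      (NormedSpace.sphere_nonempty.mpr zero_le_one) hcont.continuousOn
    have hu1 : ‖u‖ = 1 := by simpa using mem_sphere_iff_norm.mp hu
    have hu0 : u ≠ 0 := by intro h; rw [h] at hu1; simp at hu1
    have hc : 0 < N u := lt_of_le_of_ne (hnn u) (fun h => hu0 (hdef u h.symm))
    refine ⟨N u, hc, fun v => ?_⟩
    rcases eq_or_ne v 0 with rfl | hv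
    · simp [fiber_zero hsmul]
    · have hnv : ‖v‖ ≠ 0 := norm_ne_zero_iff.mpr hv
      have hpos : (0 : ℝ) < ‖v‖ := norm_pos_iff.mpr hv
      have hmem : ‖v‖⁻¹ • v ∈ Metric.sphere (0 : Fin n → ℝ) 1 := by
        simp [norm_smul, abs_of_nonneg (inv_nonneg.mpr (norm_nonneg v)),
          inv_mul_cancel₀ hnv]
      have hle : N u ≤ N (‖v‖⁻¹ • v) := (isMinOn_iff.mp humin) _ hmem
      have heq : N (‖v‖⁻¹ • v) = ‖v‖⁻¹ * N v := by
        rw [hsmul, abs_of_nonneg (inv_nonneg.mpr (norm_nonneg v))]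
      rw [heq] at hle
      have h2 := mul_le_mul_of_nonneg_right hle hpos.le
      calc N u * ‖v‖ ≤ ‖v‖⁻¹ * N v * ‖v‖ := h2
        _ = N v := by
            rw [mul_comm (‖v‖⁻¹) (N v), mul_assoc, inv_mul_cancel₀ hnv, mul_one]

lemma dual_pair_le (hnn : ∀ v, 0 ≤ N v) (hdef : ∀ v, N v = 0 → v = 0)
    (hsmul : ∀ (c : ℝ) v, N (c • v) = |c| * N v)
    (htri : ∀ v w, N (v + w) ≤ N v + N w) (v w : Fin n → ℝ) :
    |∑ i, v i * w i| ≤ sSup {r : ℝ | ∃ w' : Fin n → ℝ, N w' ≤ 1 ∧ r = |∑ i, v i * w' i|} * N w := by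
  obtain ⟨c, hc, hlow⟩ := fiber_norm_lower hnn hdef hsmul htri
  set S := {r : ℝ | ∃ w' : Fin n → ℝ, N w' ≤ 1 ∧ r = |∑ i, v i * w' i|} with hS
  have hS0 : (0 : ℝ) ∈ S := ⟨0, by simp [fiber_zero hsmul], by simp⟩
  have hSbdd : BddAbove S := by
    refine ⟨(∑ i, |v i|) * c⁻¹, fun r hr => ?_⟩
    obtain ⟨w', hw', rfl⟩ := hr
    have hw'n : ‖w'‖ ≤ c⁻¹ := by
      have h1 := (hlow w').trans hw'
      rw [inv_eq_one_div, le_div_iff₀ hc, mul_comm]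
      exact h1
    calc |∑ i, v i * w' i| ≤ ∑ i, |v i * w' i| := Finset.abs_sum_le_sum_abs _ _
      _ ≤ ∑ i, |v i| * c⁻¹ := by
          refine Finset.sum_le_sum fun i _ => ?_
          rw [abs_mul]
          refine mul_le_mul_of_nonneg_left ?_ (abs_nonneg _)
          have := norm_le_pi_norm w' i
          simp only [Real.norm_eq_abs] at this
          exact this.trans hw'n
      _ = (∑ i, |v i|) * c⁻¹ := by rw [Finset.sum_mul]
  have hsSup0 : 0 ≤ sSup S := le_csSup hSbdd hS0
  rcases eq_or_lt_of_le (hnn w) with h0 | hpos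
  · have hw0 : w = 0 := hdef w h0.symm
    subst hw0
    simp [fiber_zero hsmul]
  · set w' := (N w)⁻¹ • w with hw'
    have hw'1 : N w' ≤ 1 := by
      rw [hw', hsmul, abs_of_nonneg (inv_nonneg.mpr (hnn w)), inv_mul_cancel₀ hpos.ne']
    have hmem : |∑ i, v i * w' i| ∈ S := ⟨w', hw'1, rfl⟩
    have hle := le_csSup hSbdd hmem
    have hcalc : |∑ i, v i * w' i| = (N w)⁻¹ * |∑ i, v i * w i| := by
      have : ∑ i, v i * w' i = (N w)⁻¹ * ∑ i, v i * w i := by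
        rw [Finset.mul_sum]
        refine Finset.sum_congr rfl fun i _ => ?_
        simp [hw', mul_left_comm, mul_comm]
        ring
      rw [this, abs_mul, abs_of_nonneg (inv_nonneg.mpr (hnn w))]
    rw [hcalc] at hle
    have h3 := mul_le_mul_of_nonneg_left hle hpos.le
    calc |∑ i, v i * w i| = N w * ((N w)⁻¹ * |∑ i, v i * w i|) := by
          rw [← mul_assoc, mul_inv_cancel₀ hpos.ne', one_mul]
      _ ≤ N w * sSup S := h3
      _ = sSup S * N w := mul_comm _ _

lemma dual_le_of_rat (hnn : ∀ v, 0 ≤ N v) (hsmul : ∀ (c : ℝ) v, N (c • v) = |c| * N v)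
    (htri : ∀ v w, N (v + w) ≤ N v + N w) (v : Fin n → ℝ) {a : ℝ} (ha : 0 ≤ a)
    (h : ∀ q : Fin n → ℚ, |∑ i, v i * (q i : ℝ)| ≤ a * N (fun i => (q i : ℝ))) :
    sSup {r : ℝ | ∃ w' : Fin n → ℝ, N w' ≤ 1 ∧ r = |∑ i, v i * w' i|} ≤ a := by
  have hall : ∀ w : Fin n → ℝ, |∑ i, v i * w i| ≤ a * N w := by
    have hdense : DenseRange (fun q : Fin n → ℚ => (fun i => (q i : ℝ))) := by
      rw [Metric.denseRange_iff]
      intro w r hr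
      have hex : ∀ i, ∃ q : ℚ, |w i - (q : ℝ)| < r := fun i => exists_rat_near (w i) hr
      choose q hq using hex
      refine ⟨q, (dist_pi_lt_iff hr).mpr fun i => ?_⟩
      rw [Real.dist_eq]; exact hq i
    have hclosed : IsClosed {w : Fin n → ℝ | |∑ i, v i * w i| ≤ a * N w} := by
      refine isClosed_le ?_ ?_
      · exact (continuous_finset_sum _ fun i _ => continuous_const.mul (continuous_apply i)).abs
      · exact continuous_const.mul (fiber_cont hnn hsmul htri)
    intro w
    have hsub : Set.range (fun q : Fin n → ℚ => (fun i => (q i : ℝ))) ⊆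
        {w : Fin n → ℝ | |∑ i, v i * w i| ≤ a * N w} := by
      rintro _ ⟨q, rfl⟩; exact h q
    have hcl := hclosed.closure_subset_iff.mpr hsub
    exact hcl (hdense w)
  refine Real.sSup_le ?_ ha
  rintro r ⟨w, hw, rfl⟩
  calc |∑ i, v i * w i| ≤ a * N w := hall w
    _ ≤ a * 1 := mul_le_mul_of_nonneg_left hw ha
    _ = a := mul_one a

end Fiber

section Aux

variable {X : Type*} [MeasurableSpace X] {μ : Measure X}

lemma notMem_of_mem {B : MBB X μ} {x : X} {n k : ℕ} (hx : x ∈ B.E n) (hk : k ≠ n) :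
    x ∉ B.E k :=
  fun hxk => Set.disjoint_left.mp (B.disjE k n hk) hxk hx

lemma tsum_indicator_eq {B : MBB X μ} (f : (k : ℕ) → X → ℝ) {x : X} {n : ℕ}
    (hx : x ∈ B.E n) : ∑' k, (B.E k).indicator (f k) x = f n x := by
  rw [tsum_eq_single n fun k hk => Set.indicator_of_notMem (notMem_of_mem hx hk) _]
  exact Set.indicator_of_mem hx _

lemma pairing_eq {B : MBB X μ} (sd s : Sec B) {x : X} {n : ℕ} (hx : x ∈ B.E n) :
    pairing B sd s x = ∑ i, sd.val n x i * s.val n x i := by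
  simp only [pairing]
  exact tsum_indicator_eq _ hx

lemma ptNorm_eq {B : MBB X μ} (s : Sec B) {x : X} {n : ℕ} (hx : x ∈ B.E n) :
    ptNorm B s x = B.nrm n x (s.val n x) := by
  simp only [ptNorm]
  exact tsum_indicator_eq _ hx

lemma dualPtNorm_eq {B : MBB X μ} (sd : Sec B) {x : X} {n : ℕ} (hx : x ∈ B.E n) :
    dualPtNorm B sd x = dualNrm B n x (sd.val n x) := by
  simp only [dualPtNorm]
  exact tsum_indicator_eq _ hx

lemma ae_norm_props (B : MBB X μ) : ∀ᵐ x ∂μ, ∀ n, x ∈ B.E n →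
    ((∀ v, 0 ≤ B.nrm n x v) ∧ (∀ v, B.nrm n x v = 0 → v = 0) ∧
     (∀ (c : ℝ) v, B.nrm n x (c • v) = |c| * B.nrm n x v) ∧
     (∀ v w, B.nrm n x (v + w) ≤ B.nrm n x v + B.nrm n x w)) := by
  rw [ae_all_iff]
  intro n
  filter_upwards [B.nrm_nonneg n, B.nrm_definite n, B.nrm_smul n, B.nrm_triangle n]
    with x h1 h2 h3 h4 hx
  exact ⟨h1 hx, h2 hx, h3 hx, h4 hx⟩

lemma constSec_val_self (B : MBB X μ) (n : ℕ) (q : Fin n → ℝ) (x : X) :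
    (constSec B n q).val n x = q := by
  funext i
  simp [constSec]

lemma cover (B : MBB X μ) (x : X) : ∃ n, x ∈ B.E n :=
  Set.mem_iUnion.mp (Set.eq_univ_iff_forall.mp B.unionE x)

lemma T_lincomb {B : MBB X μ} (T : Sec B → X → ℝ)
    (hae : ∀ s t, Sec.aeeq B s t → T s =ᵐ[μ] T t)
    (hadd : ∀ s t, T (Sec.add s t) =ᵐ[μ] fun x => T s x + T t x)
    (hsmul : ∀ (g : X → ℝ) (hg : Measurable g) (s : Sec B),
      T (Sec.smul g hg s) =ᵐ[μ] fun x => g x * T s x) :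
    ∀ (k : ℕ) (g : Fin k → X → ℝ) (hg : ∀ i, Measurable (g i)) (u : Fin k → Sec B),
      T (lincomb g hg u) =ᵐ[μ] fun x => ∑ i, g i x * T (u i) x := by
  intro k
  induction k with
  | zero =>
    intro g hg u
    have h1 : Sec.aeeq B (lincomb g hg u)
        (Sec.smul (fun _ => 0) measurable_const (lincomb g hg u)) := by
      intro m
      refine ae_of_all _ fun x hx => ?_
      funext i
      simp [lincomb, Sec.smul]
    have h2 := hae _ _ h1
    have h3 := hsmul (fun _ => 0) measurable_const (lincomb g hg u)
    filter_upwards [h2, h3] with x hx2 hx3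
    rw [hx2, hx3]
    simp
  | succ k ih =>
    intro g hg u
    set s1 := Sec.smul (g 0) (hg 0) (u 0) with hs1
    set s2 := lincomb (fun i => g i.succ) (fun i => hg i.succ) (fun i => u i.succ) with hs2
    have h1 : Sec.aeeq B (lincomb g hg u) (Sec.add s1 s2) := by
      intro m
      refine ae_of_all _ fun x hx => ?_
      funext j
      simp [lincomb, Sec.add, Sec.smul, hs1, hs2, Fin.sum_univ_succ]
    have h2 := hae _ _ h1
    have h3 := hadd s1 s2
    have h4 := hsmul (g 0) (hg 0) (u 0)
    have h5 := ih (fun i => g i.succ) (fun i => hg i.succ) (fun i => u i.succ)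
    filter_upwards [h2, h3, h4, h5] with x a b c d
    rw [a, b, c, d, Fin.sum_univ_succ]

end Aux

/-- **Duality: `Γ(T)* = Γ(T*)`.** For a measurable Banach bundle `T` over a metric
measure space `(X,d,m)`, the dual module of `Γ(T)` (the `L⁰(m)`-linear continuous maps
`Γ(T) → L⁰(m)` with the pointwise dual norm) is isometrically isomorphic, via the
duality pairing, to the section module `Γ(T*)` of the dual bundle: the pairing with a
section `s*` of `T*` is pointwise bounded by `|s*|_* |s|` with `|s*|_*` the least such
bound (isometry), the pairing is injective on a.e.-classes, and every `L⁰(m)`-linear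
continuous functional on sections is of this form (surjectivity). -/
theorem dual_module_eq_sections_of_dual_bundle
    {X : Type*} [MetricSpace X] [CompleteSpace X] [SecondCountableTopology X]
    [MeasurableSpace X] [BorelSpace X]
    (μ : Measure X) [IsLocallyFiniteMeasure μ] (hμ : μ ≠ 0)
    (m' : Measure X) [IsProbabilityMeasure m'] (h₁ : μ ≪ m') (h₂ : m' ≪ μ)
    (B : MBB X μ) :
    -- the pairing with `s*` is a module morphism with pointwise norm `dualPtNorm s*` …
    (∀ sd s : Sec B, ∀ᵐ x ∂μ, |pairing B sd s x| ≤ dualPtNorm B sd x * ptNorm B s x) ∧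
    (∀ sd : Sec B, ∀ g : X → ℝ, Measurable g → (∀ᵐ x ∂μ, 0 ≤ g x) →
      (∀ s : Sec B, ∀ᵐ x ∂μ, |pairing B sd s x| ≤ g x * ptNorm B s x) →
      ∀ᵐ x ∂μ, dualPtNorm B sd x ≤ g x) ∧
    -- … it is injective on a.e.-classes …
    (∀ sd td : Sec B,
      (∀ s : Sec B, pairing B sd s =ᵐ[μ] pairing B td s) → Sec.aeeq B sd td) ∧
    -- … and every `L⁰(m)`-linear continuous functional is such a pairing.
    (∀ T : Sec B → X → ℝ,
      (∀ s, Measurable (T s)) →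
      (∀ s t : Sec B, Sec.aeeq B s t → T s =ᵐ[μ] T t) →
      (∀ s t : Sec B, T (Sec.add s t) =ᵐ[μ] fun x => T s x + T t x) →
      (∀ (g : X → ℝ) (hg : Measurable g) (s : Sec B),
        T (Sec.smul g hg s) =ᵐ[μ] fun x => g x * T s x) →
      (∀ (u : ℕ → Sec B) (s : Sec B),
        Tendsto (fun k => secDist B m' (u k) s) atTop (nhds 0) →
        TendstoInMeasure m' (fun k => T (u k)) atTop (T s)) →
      ∃ sd : Sec B, ∀ s : Sec B, T s =ᵐ[μ] pairing B sd s) := by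

  refine ⟨?_, ?_, ?_, ?_⟩
  · -- the pairing is bounded by the dual norm times the norm
    intro sd s
    filter_upwards [ae_norm_props B] with x hx
    obtain ⟨n, hn⟩ := cover B x
    rw [pairing_eq sd s hn, dualPtNorm_eq sd hn, ptNorm_eq s hn]
    obtain ⟨h1, h2, h3, h4⟩ := hx n hn
    simp only [dualNrm]
    exact dual_pair_le h1 h2 h3 h4 (sd.val n x) (s.val n x)
  · -- minimality of the dual norm
    intro sd g hgm hg0 hbound
    have hq : ∀ᵐ x ∂μ, ∀ n : ℕ, ∀ q : Fin n → ℚ,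
        |pairing B sd (constSec B n fun i => (q i : ℝ)) x| ≤
          g x * ptNorm B (constSec B n fun i => (q i : ℝ)) x := by
      rw [ae_all_iff]
      intro n
      rw [ae_all_iff]
      intro q
      exact hbound _
    filter_upwards [ae_norm_props B, hq, hg0] with x hx hxq hgx
    obtain ⟨n, hn⟩ := cover B x
    rw [dualPtNorm_eq sd hn]
    obtain ⟨h1, h2, h3, h4⟩ := hx n hn
    simp only [dualNrm]
    refine dual_le_of_rat h1 h3 h4 (sd.val n x) hgx fun q => ?_
    have hthis := hxq n q
    rw [pairing_eq sd _ hn, ptNorm_eq _ hn, constSec_val_self] at hthis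
    exact hthis
  · -- injectivity
    intro sd td h n
    have hi : ∀ᵐ x ∂μ, ∀ i : Fin n,
        pairing B sd (constSec B n (Pi.single i 1)) x
          = pairing B td (constSec B n (Pi.single i 1)) x := by
      rw [ae_all_iff]
      intro i
      exact h _
    filter_upwards [hi] with x hx hxE
    funext i
    have hthis := hx i
    rw [pairing_eq sd _ hxE, pairing_eq td _ hxE, constSec_val_self] at hthis
    simpa [Pi.single_apply, mul_ite, Finset.sum_ite_eq'] using hthis
  · -- surjectivity
    intro T hTmeas hae hadd hsmul _
    set sd : Sec B := ⟨fun n x i => T (constSec B n (Pi.single i 1)) x,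
      fun n => measurable_pi_lambda _ fun i => hTmeas _⟩ with hsd
    refine ⟨sd, fun s => ?_⟩
    have key : ∀ n : ℕ, ∀ᵐ x ∂μ, x ∈ B.E n →
        T s x = ∑ i, sd.val n x i * s.val n x i := by
      intro n
      set χ : X → ℝ := (B.E n).indicator (fun _ => 1) with hχ
      have hχm : Measurable χ := measurable_const.indicator (B.measE n)
      set u : Fin n → Sec B := fun i => constSec B n (Pi.single i 1) with hu
      set g : Fin n → X → ℝ := fun i x => s.val n x i with hgdef
      have hgm : ∀ i, Measurable (g i) := fun i => (measurable_pi_apply i).comp (s.meas n)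
      have haeeq : Sec.aeeq B (Sec.smul χ hχm s) (lincomb g hgm u) := by
        intro k
        refine ae_of_all _ fun x hx => ?_
        funext j
        by_cases hk : k = n
        · subst hk
          have hx1 : χ x = 1 := by simp [hχ, Set.indicator_of_mem hx]
          simp [Sec.smul, lincomb, hx1, hu, hgdef, constSec, Pi.single_apply,
            Finset.sum_ite_eq', mul_ite]
        · have hx0 : χ x = 0 := by
            simp [hχ, Set.indicator_of_notMem (notMem_of_mem hx (Ne.symm hk))]
          simp [Sec.smul, lincomb, hx0, hu, constSec, hk]
      have h2 := hae _ _ haeeq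
      have h3 := hsmul χ hχm s
      have h4 := T_lincomb T hae hadd hsmul n g hgm u
      filter_upwards [h2, h3, h4] with x a b c hx
      have hχ1 : χ x = 1 := by simp [hχ, Set.indicator_of_mem hx]
      have hTs : T s x = ∑ i, g i x * T (u i) x := by
        rw [← c, ← a, b, hχ1, one_mul]
      rw [hTs]
      exact Finset.sum_congr rfl fun i _ => by simp [hgdef, hu, hsd, mul_comm]
    have hall := ae_all_iff.mpr key
    filter_upwards [hall] with x hx
    obtain ⟨n, hn⟩ := cover B x
    rw [pairing_eq sd s hn]
    exact hx n hn


end L0SerreSwan
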